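/- Consider the maximin problem (Problem A): maximize, over y ≥ 0 with g(y) ≤ G, the inner value m_A(y) := min{ f(x) : x ≥ 0, h(x,y) ≥ H }. Suppose (x₁, y₁) is an optimal solution of Problem A, i.e. g(y₁) ≤ G, h(x₁, y₁) ≥ H, f(x₁) = m_A(y₁), and m_A(y) ≤ f(x₁) for every y ≥ 0 with g(y) ≤ G. Then both constraints are satisfied with equality: h(x₁, y₁) = H and g(y₁) = G. -/

import Mathlib

open Set

/-- at an optimal solution `(x₁, y₁)` of the maximin problem
(maximize over `y ≥ 0` with `g y ≤ G` the inner value `min { f x : x ≥ 0, h x y ≥ H }`),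
both constraints hold with equality: `h x₁ y₁ = H` and `g y₁ = G`. -/
theorem stmt2
    (f g : ℝ → ℝ) (h : ℝ → ℝ → ℝ) (H G : ℝ)
    (hf_cont : ContinuousOn f (Ici 0)) (hf_mono : StrictMonoOn f (Ici 0))
    (hf_unbdd : ∀ M : ℝ, ∃ x, 0 ≤ x ∧ M < f x)
    (hg_cont : ContinuousOn g (Ici 0)) (hg_mono : StrictMonoOn g (Ici 0))
    (hg_unbdd : ∀ M : ℝ, ∃ y, 0 ≤ y ∧ M < g y)
    (hh_cont : ContinuousOn (fun q : ℝ × ℝ => h q.1 q.2) (Ici 0 ×ˢ Ici 0))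
    (hh_mono : ∀ y ∈ Ici (0 : ℝ), StrictMonoOn (fun x => h x y) (Ici 0))
    (hh_anti : ∀ x ∈ Ici (0 : ℝ), StrictAntiOn (fun y => h x y) (Ici 0))
    (hH0 : ∀ y, 0 ≤ y → h 0 y < H) (hG0 : g 0 < G)
    (hfeas : ∀ y, 0 ≤ y → ∃ x, 0 ≤ x ∧ H ≤ h x y)
    -- the inner value of the maximin problem
    (mA : ℝ → ℝ) (hmA : ∀ y, mA y = sInf (f '' {x | 0 ≤ x ∧ H ≤ h x y}))
    -- `(x₁, y₁)` is an optimal solution of the maximin problem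
    (x₁ y₁ : ℝ) (hx₁ : 0 ≤ x₁) (hy₁ : 0 ≤ y₁)
    (hy₁G : g y₁ ≤ G) (hx₁H : H ≤ h x₁ y₁)
    (hx₁opt : f x₁ = mA y₁)
    (hy₁opt : ∀ y, 0 ≤ y → g y ≤ G → mA y ≤ f x₁) :
    h x₁ y₁ = H ∧ g y₁ = G := by
  -- continuity of `h · y` on `Ici 0` for fixed `y ≥ 0`
  have hcx : ∀ y, 0 ≤ y → ContinuousOn (fun x => h x y) (Ici 0) := by
    intro y hy
    have : ContinuousOn ((fun q : ℝ × ℝ => h q.1 q.2) ∘ (fun x => (x, y))) (Ici 0) :=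
      hh_cont.comp (Continuous.continuousOn (by continuity)) (fun x hx => ⟨hx, hy⟩)
    exact this
  have hbdd : ∀ y : ℝ, BddBelow (f '' {x | 0 ≤ x ∧ H ≤ h x y}) := by
    intro y
    refine ⟨f 0, ?_⟩
    rintro z ⟨x, ⟨hx0, _⟩, rfl⟩
    exact hf_mono.monotoneOn self_mem_Ici hx0 hx0
  -- Claim 1
  have h1 : h x₁ y₁ = H := by
    by_contra hne
    have hlt : H < h x₁ y₁ := lt_of_le_of_ne hx₁H (Ne.symm hne)
    have hmem : H ∈ Icc (h 0 y₁) (h x₁ y₁) := ⟨(hH0 y₁ hy₁).le, hx₁H⟩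
    obtain ⟨x', hx'Icc, hx'eq⟩ :=
      intermediate_value_Icc hx₁ ((hcx y₁ hy₁).mono Icc_subset_Ici_self) hmem
    have hx'0 : (0:ℝ) ≤ x' := hx'Icc.1
    have hx'lt : x' < x₁ := by
      rcases lt_or_eq_of_le hx'Icc.2 with hlt' | heq
      · exact hlt'
      · exfalso; rw [heq] at hx'eq; exact hne hx'eq
    have hle : mA y₁ ≤ f x' := by
      rw [hmA]
      exact csInf_le (hbdd y₁) ⟨x', ⟨hx'0, hx'eq.ge⟩, rfl⟩
    have : f x' < f x₁ := hf_mono hx'0 hx₁ hx'lt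
    rw [hx₁opt] at this
    exact absurd hle (not_le.mpr this)
  refine ⟨h1, ?_⟩
  -- Claim 2
  by_contra hne
  have hltG : g y₁ < G := lt_of_le_of_ne hy₁G hne
  obtain ⟨y', hy'0, hy'G⟩ := hg_unbdd G
  have hy₁y' : y₁ ≤ y' := by
    by_contra hcon
    push_neg at hcon
    exact absurd (hg_mono hy'0 hy₁ hcon) (not_lt.mpr (le_of_lt (hltG.trans hy'G)))
  obtain ⟨y₂, hy₂Icc, hy₂eq⟩ :=
    intermediate_value_Icc hy₁y' (hg_cont.mono (Icc_subset_Ici_self.trans (by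
      exact fun z hz => le_trans hy₁ hz))) ⟨hltG.le, hy'G.le⟩
  have hy₂0 : (0:ℝ) ≤ y₂ := le_trans hy₁ hy₂Icc.1
  have hy₁lt : y₁ < y₂ := by
    rcases lt_or_eq_of_le hy₂Icc.1 with hlt' | heq
    · exact hlt'
    · exfalso; rw [← heq] at hy₂eq; exact hne hy₂eq
  -- the feasible set for y₂
  set S : Set ℝ := {x | 0 ≤ x ∧ H ≤ h x y₂} with hS
  have hSne : S.Nonempty := by
    obtain ⟨x, hx0, hxH⟩ := hfeas y₂ hy₂0
    exact ⟨x, hx0, hxH⟩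
  have hSbdd : BddBelow S := ⟨0, fun x hx => hx.1⟩
  have hSclosed : IsClosed S := by
    have : S = Ici 0 ∩ (fun x => h x y₂) ⁻¹' Ici H := by
      ext x; simp [hS, and_comm]
    rw [this]
    exact (hcx y₂ hy₂0).preimage_isClosed_of_isClosed isClosed_Ici isClosed_Ici
  have hxs : sInf S ∈ S := hSclosed.csInf_mem hSne hSbdd
  set xs := sInf S with hxsdef
  have hxs0 : (0:ℝ) ≤ xs := hxs.1
  have hxsH : H ≤ h xs y₂ := hxs.2
  -- h xs y₂ < h xs y₁ by strict antitonicity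
  have hanti : h xs y₂ < h xs y₁ := hh_anti xs hxs0 hy₁ hy₂0 hy₁lt
  have hgt : h x₁ y₁ < h xs y₁ := by rw [h1]; exact lt_of_le_of_lt hxsH hanti
  have hx₁lt : x₁ < xs := by
    by_contra hcon
    push_neg at hcon
    rcases lt_or_eq_of_le hcon with hlt' | heq
    · exact absurd (hh_mono y₁ hy₁ hxs0 hx₁ hlt') (not_lt.mpr hgt.le)
    · rw [heq] at hgt; exact lt_irrefl _ hgt
  have hfxlt : f x₁ < f xs := hf_mono hx₁ hxs0 hx₁lt
  -- f xs ≤ mA y₂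
  have hxle : f xs ≤ mA y₂ := by
    rw [hmA]
    refine le_csInf (hSne.image f) ?_
    rintro z ⟨x, hxS, rfl⟩
    exact hf_mono.monotoneOn hxs0 hxS.1 (csInf_le hSbdd hxS)
  have := hy₁opt y₂ hy₂0 hy₂eq.le
  linarith
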